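/- Let R be a Noetherian local domain, I an ideal of R with I ≠ 0. If I ⊗_R I is a torsion-free R-module, then I is principal. -/

import Mathlib

open TensorProduct

theorem comm_key (R : Type*) [CommRing R] [IsDomain R] (I : Ideal R)
    (htf : NoZeroSMulDivisors R (I ⊗[R] I)) (a b : I) :
    (a ⊗ₜ[R] b : I ⊗[R] I) = b ⊗ₜ a := by
  by_cases ha : (a : R) = 0
  · have : a = 0 := Subtype.ext ha
    simp [this]
  by_cases hb : (b : R) = 0
  · have : b = 0 := Subtype.ext hb
    simp [this]
  have hab : (a : R) * b ≠ 0 := mul_ne_zero ha hb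
  apply smul_right_injective (I ⊗[R] I) hab
  have hba : ((b:R) • a : I) = (a:R) • b := Subtype.ext (by simp [mul_comm])
  have h1 : ((a:R) * b) • (a ⊗ₜ[R] b : I ⊗[R] I) = ((b:R)•a) ⊗ₜ ((a:R)•b) := by
    rw [smul_tmul', mul_smul, smul_tmul]
  have h2 : ((a:R) * b) • (b ⊗ₜ[R] a : I ⊗[R] I) = ((a:R)•b) ⊗ₜ ((b:R)•a) := by
    rw [smul_tmul', mul_comm, mul_smul, smul_tmul]
  show ((a:R) * b) • (a ⊗ₜ[R] b : I ⊗[R] I) = ((a:R) * b) • (b ⊗ₜ[R] a : I ⊗[R] I)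
  rw [h1, h2, hba]

/-- Let `R` be a Noetherian local domain and `I` a nonzero ideal. If `I ⊗_R I`
is a torsion-free `R`-module, then `I` is principal. -/
theorem stmt_17 (R : Type*) [CommRing R] [IsDomain R] [IsNoetherianRing R]
    [IsLocalRing R] (I : Ideal R) (hI : I ≠ ⊥)
    (htf : NoZeroSMulDivisors R (I ⊗[R] I)) :
    I.IsPrincipal := by
  classical
  let k := IsLocalRing.ResidueField R
  have hfin : Module.Finite R I := Module.Finite.iff_fg.mpr (IsNoetherian.noetherian I)
  -- V := k ⊗[R] I
  have hsurj := TensorProduct.mk_surjective R (↥I) k Ideal.Quotient.mk_surjective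
  by_cases hone : ∃ v : k ⊗[R] (↥I), ∀ w : k ⊗[R] (↥I), ∃ c : k, w = c • v
  · -- rank ≤ 1 : I is principal
    obtain ⟨v, hv⟩ := hone
    by_cases hv0 : v = 0
    · -- V = 0, so I = 0, contradiction
      exfalso
      have : Subsingleton (k ⊗[R] (↥I)) := by
        constructor
        intro x y
        obtain ⟨c, rfl⟩ := hv x
        obtain ⟨d, rfl⟩ := hv y
        simp [hv0]
      have : Subsingleton (↥I) := (IsLocalRing.subsingleton_tensorProduct (R := R)).mp this
      apply hI
      ext x
      simp only [Ideal.mem_bot]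
      constructor
      · intro hx
        have : (⟨x, hx⟩ : I) = ⟨0, I.zero_mem⟩ := Subsingleton.elim _ _
        exact congrArg Subtype.val this
      · rintro rfl; exact I.zero_mem
    · obtain ⟨x, hx⟩ := hsurj v
      have li : LinearIndependent k (fun (_ : Unit) => v) :=
        LinearIndependent.of_subsingleton () hv0
      have hspan : ⊤ ≤ Submodule.span k (Set.range (fun (_ : Unit) => v)) := by
        intro w _
        obtain ⟨c, rfl⟩ := hv w
        exact Submodule.smul_mem _ _ (Submodule.subset_span ⟨(), rfl⟩)
      let b : Module.Basis Unit k (k ⊗[R] (↥I)) := Module.Basis.mk li hspan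
      have hb : ∀ i : Unit, (1 : k) ⊗ₜ[R] x = b i := fun i => by
        rw [Module.Basis.mk_apply]; exact hx
      have htop : Submodule.span R (Set.range (fun (_ : Unit) => x)) = ⊤ :=
        IsLocalRing.span_eq_top_of_tmul_eq_basis (R := R) (fun _ => x) b hb
      refine ⟨⟨(x : R), ?_⟩⟩
      have := congrArg (Submodule.map I.subtype) htop
      rw [Submodule.map_top, Submodule.range_subtype] at this
      rw [Set.range_const, Submodule.map_span, Set.image_singleton] at this
      exact this.symm
  · -- rank ≥ 2 : contradiction with commutativity
    exfalso
    push_neg at hone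
    obtain ⟨v, hv⟩ := hone 0
    have hv0 : v ≠ 0 := by
      intro h; exact hv 0 (by simp [h])
    obtain ⟨w, hw⟩ := hone v
    have li : LinearIndepOn k id ({v, w} : Set (k ⊗[R] ↥I)) :=
      linearIndepOn_id_pair hv0 (fun c h => hw c h.symm)
    let B := Module.Basis.extend li
    have hvmem : v ∈ li.extend (Set.subset_univ _) :=
      li.subset_extend _ (Set.mem_insert _ _)
    have hwmem : w ∈ li.extend (Set.subset_univ _) :=
      li.subset_extend _ (Set.mem_insert_of_mem _ rfl)
    have hvw : v ≠ w := fun h => hw 1 (by simp [h])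
    obtain ⟨a, ha⟩ := hsurj v
    obtain ⟨b, hb⟩ := hsurj w
    -- linear functionals
    let f : (k ⊗[R] ↥I) →ₗ[k] k := B.coord ⟨v, hvmem⟩
    let g : (k ⊗[R] ↥I) →ₗ[k] k := B.coord ⟨w, hwmem⟩
    have hBv : B ⟨v, hvmem⟩ = v := Module.Basis.extend_apply_self _ _
    have hBw : B ⟨w, hwmem⟩ = w := Module.Basis.extend_apply_self _ _
    have hfv : f v = 1 := by rw [← hBv]; simp [f, Module.Basis.coord_apply, Module.Basis.repr_self]
    have hfw : f w = 0 := by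
      rw [← hBw]
      simp only [f, Module.Basis.coord_apply, Module.Basis.repr_self]
      rw [Finsupp.single_apply_eq_zero]
      intro h
      exact absurd (congrArg Subtype.val h) hvw
    have hgv : g v = 0 := by
      rw [← hBv]
      simp only [g, Module.Basis.coord_apply, Module.Basis.repr_self]
      rw [Finsupp.single_apply_eq_zero]
      intro h
      exact absurd (congrArg Subtype.val h).symm hvw
    have hgw : g w = 1 := by rw [← hBw]; simp [g, Module.Basis.coord_apply, Module.Basis.repr_self]
    let F : (↥I) →ₗ[R] k := (f.restrictScalars R) ∘ₗ (TensorProduct.mk R k (↥I) 1)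
    let G : (↥I) →ₗ[R] k := (g.restrictScalars R) ∘ₗ (TensorProduct.mk R k (↥I) 1)
    have hFa : F a = 1 := by simp only [F, LinearMap.comp_apply, LinearMap.coe_restrictScalars,
      TensorProduct.mk_apply, ha, hfv]
    have hFb : F b = 0 := by simp only [F, LinearMap.comp_apply, LinearMap.coe_restrictScalars,
      TensorProduct.mk_apply, hb, hfw]
    have hGa : G a = 0 := by simp only [G, LinearMap.comp_apply, LinearMap.coe_restrictScalars,
      TensorProduct.mk_apply, ha, hgv]
    have hGb : G b = 1 := by simp only [G, LinearMap.comp_apply, LinearMap.coe_restrictScalars,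
      TensorProduct.mk_apply, hb, hgw]
    have hcomm := comm_key R I htf a b
    have := congrArg (LinearMap.mul' R k ∘ₗ TensorProduct.map F G) hcomm
    simp only [LinearMap.comp_apply, TensorProduct.map_tmul, LinearMap.mul'_apply,
      hFa, hFb, hGa, hGb, mul_one, one_mul, mul_zero, zero_mul] at this
    exact one_ne_zero this
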